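/- Let L be an n × N matrix over F, let X_A ⊊ {1,…,n}, and let B be a nonempty subset of {1,…,n}∖X_A. The adversary owning {x_j}_{j∈X_A} and observing xL has no information about x_B if and only if for every u ∈ F^n with u ⊲ X_A and every family (α_i)_{i∈B} of elements of F, not all zero, the vector u + Σ_{i∈B} α_i e_i does not lie in C(L). In particular, for each single index i ∈ {1,…,n}∖X_A, the adversary has no information about x_i if and only if u + e_i ∉ C(L) for every u ⊲ X_A. -/

import Mathlib

open Matrix



/-- An adversary owning `{x_j}_{j ∈ XA}` and observing `x * L` has no information about `x_B`:
for every message vector `x` and all prescribed values `g, g'` on `B`, the number of message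
vectors consistent with the adversary's view and taking the values `g` on `B` equals the
number taking the values `g'` on `B`. -/
def noInfo {F : Type} [Field F] {n N : ℕ} (L : Matrix (Fin n) (Fin N) F)
    (XA B : Set (Fin n)) : Prop :=
  ∀ x g g' : Fin n → F,
    Nat.card {z : Fin n → F // Matrix.vecMul z L = Matrix.vecMul x L ∧
      (∀ j ∈ XA, z j = x j) ∧ (∀ j ∈ B, z j = g j)} =
    Nat.card {z : Fin n → F // Matrix.vecMul z L = Matrix.vecMul x L ∧
      (∀ j ∈ XA, z j = x j) ∧ (∀ j ∈ B, z j = g' j)}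

lemma toDual_pi {F : Type} [Field F] {n : ℕ} (v w : Fin n → F) :
    (Pi.basisFun F (Fin n)).toDual v w = v ⬝ᵥ w := by
  conv_lhs => rw [← (Pi.basisFun F (Fin n)).sum_repr w]
  rw [map_sum]
  simp only [_root_.map_smul, smul_eq_mul, Module.Basis.toDual_apply_left, Pi.basisFun_repr,
    dotProduct]
  exact Finset.sum_congr rfl fun i _ => mul_comm _ _

lemma mem_of_perp {F : Type} [Field F] {n : ℕ} (S : Submodule F (Fin n → F)) (a : Fin n → F)
    (h : ∀ v : Fin n → F, (∀ s ∈ S, v ⬝ᵥ s = 0) → v ⬝ᵥ a = 0) : a ∈ S := by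
  rw [← Subspace.dualAnnihilator_dualCoannihilator_eq (W := S),
    Submodule.mem_dualCoannihilator]
  intro φ hφ
  obtain ⟨v, rfl⟩ := (Pi.basisFun F (Fin n)).toDualEquiv.surjective φ
  rw [Submodule.mem_dualAnnihilator] at hφ
  have := h v (fun s hs => by rw [← toDual_pi]; exact hφ s hs)
  rwa [← toDual_pi] at this

lemma key {F : Type} [Field F] [Fintype F] {n N : ℕ} (L : Matrix (Fin n) (Fin N) F)
    (XA B : Set (Fin n)) :
    noInfo L XA B ↔
      ∀ u : Fin n → F, (∀ j, u j ≠ 0 → j ∈ XA) →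
        ∀ α : Fin n → F, (∀ j, α j ≠ 0 → j ∈ B) → α ≠ 0 →
          u + α ∉ Submodule.span F (Set.range fun c : Fin N => fun r : Fin n => L r c) := by
  classical
  set W := Submodule.span F (Set.range fun c : Fin N => fun r : Fin n => L r c) with hWdef
  have fact1 : ∀ z : Fin n → F, z ᵥ* L = 0 ↔ ∀ w ∈ W, z ⬝ᵥ w = 0 := by
    intro z
    constructor
    · intro hz w hw
      induction hw using Submodule.span_induction with
      | mem w hw =>
          obtain ⟨c, rfl⟩ := hw
          exact congrFun hz c
      | zero => simp
      | add a b _ _ ha hb => rw [dotProduct_add, ha, hb, add_zero]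
      | smul r a _ ha => rw [dotProduct_smul, ha, smul_zero]
    · intro h
      funext c
      exact h (fun r => L r c) (Submodule.subset_span ⟨c, rfl⟩)
  have step1 : noInfo L XA B ↔
      ∀ g : Fin n → F, ∃ v : Fin n → F,
        v ᵥ* L = 0 ∧ (∀ j ∈ XA, v j = 0) ∧ ∀ j ∈ B, v j = g j := by
    constructor
    · intro h g
      have h0 := h 0 g 0
      have hne : Nonempty {z : Fin n → F // z ᵥ* L = (0 : Fin n → F) ᵥ* L ∧
          (∀ j ∈ XA, z j = (0 : Fin n → F) j) ∧ ∀ j ∈ B, z j = (0 : Fin n → F) j} :=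
        ⟨⟨0, rfl, fun j _ => rfl, fun j _ => rfl⟩⟩
      have hpos : 0 < Nat.card {z : Fin n → F // z ᵥ* L = (0 : Fin n → F) ᵥ* L ∧
          (∀ j ∈ XA, z j = (0 : Fin n → F) j) ∧ ∀ j ∈ B, z j = g j} := by
        rw [h0]; exact Nat.card_pos
      obtain ⟨⟨z, hz1, hz2, hz3⟩⟩ := (Nat.card_pos_iff.mp hpos).1
      refine ⟨z, by rwa [Matrix.zero_vecMul] at hz1, fun j hj => hz2 j hj, hz3⟩
    · intro h x g g'
      obtain ⟨v, hv1, hv2, hv3⟩ := h (g' - g)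
      refine Nat.card_congr ⟨fun z => ⟨z.1 + v, ?_, ?_, ?_⟩, fun z => ⟨z.1 - v, ?_, ?_, ?_⟩,
        fun z => Subtype.ext (by simp), fun z => Subtype.ext (by simp)⟩
      · rw [Matrix.add_vecMul, z.2.1, hv1, add_zero]
      · intro j hj; rw [Pi.add_apply, z.2.2.1 j hj, hv2 j hj, add_zero]
      · intro j hj; rw [Pi.add_apply, z.2.2.2 j hj, hv3 j hj, Pi.sub_apply]; ring
      · rw [Matrix.sub_vecMul, z.2.1, hv1, sub_zero]
      · intro j hj; rw [Pi.sub_apply, z.2.2.1 j hj, hv2 j hj, sub_zero]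
      · intro j hj; rw [Pi.sub_apply, z.2.2.2 j hj, hv3 j hj, Pi.sub_apply]; ring
  rw [step1]
  constructor
  · intro hsur u hu α hα hα0 hmem
    obtain ⟨i, hi⟩ := Function.ne_iff.mp hα0
    obtain ⟨v, hv1, hv2, hv3⟩ := hsur (Pi.single i (α i)⁻¹)
    have hdot : v ⬝ᵥ (u + α) = 0 := (fact1 v).mp hv1 _ hmem
    have hdu : v ⬝ᵥ u = 0 := by
      apply Finset.sum_eq_zero
      intro j _
      by_cases hj : j ∈ XA
      · rw [hv2 j hj, zero_mul]
      · have : u j = 0 := by by_contra hcon; exact hj (hu j hcon)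
        rw [this, mul_zero]
    have hda : v ⬝ᵥ α = 1 := by
      have hterm : ∀ j, v j * α j = (Pi.single i (1 : F) : Fin n → F) j := by
        intro j
        by_cases hj : α j = 0
        · have hji : j ≠ i := fun h => hi (h ▸ hj)
          rw [hj, mul_zero, Pi.single_eq_of_ne hji]
        · rw [hv3 j (hα j hj)]
          by_cases hji : j = i
          · subst hji
            rw [Pi.single_eq_same, Pi.single_eq_same, inv_mul_cancel₀ hi]
          · rw [Pi.single_eq_of_ne hji, zero_mul, Pi.single_eq_of_ne hji]
      show ∑ j, v j * α j = 1
      rw [Finset.sum_congr rfl fun j _ => hterm j, Finset.sum_pi_single']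
      simp
    rw [dotProduct_add, hdu, hda, zero_add] at hdot
    exact one_ne_zero hdot
  · intro hrhs g
    by_contra hcon
    push_neg at hcon
    let π : (Fin n → F) →ₗ[F] (Fin n → F) :=
      { toFun := fun v j => if j ∈ B then v j else 0
        map_add' := fun a b => by funext j; by_cases h : j ∈ B <;> simp [h]
        map_smul' := fun c a => by funext j; by_cases h : j ∈ B <;> simp [h] }
    let πA : (Fin n → F) →ₗ[F] (Fin n → F) :=
      { toFun := fun v j => if j ∈ XA then v j else 0
        map_add' := fun a b => by funext j; by_cases h : j ∈ XA <;> simp [h]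
        map_smul' := fun c a => by funext j; by_cases h : j ∈ XA <;> simp [h] }
    let πU : (Fin n → F) →ₗ[F] (Fin n → F) :=
      { toFun := fun v j => if j ∈ XA then 0 else v j
        map_add' := fun a b => by funext j; by_cases h : j ∈ XA <;> simp [h]
        map_smul' := fun c a => by funext j; by_cases h : j ∈ XA <;> simp [h] }
    have hkerA : ∀ v : Fin n → F, πA v = 0 ↔ ∀ j ∈ XA, v j = 0 := by
      intro v
      constructor
      · intro h j hj
        have := congrFun h j
        simpa [πA, hj] using this
      · intro h
        funext j
        by_cases hj : j ∈ XA <;> simp [πA, hj, h]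
    set Vsub : Submodule F (Fin n → F) := LinearMap.ker L.vecMulLinear ⊓ LinearMap.ker πA
      with hVdef
    have mem_Vsub : ∀ v : Fin n → F,
        v ∈ Vsub ↔ v ᵥ* L = 0 ∧ ∀ j ∈ XA, v j = 0 := by
      intro v
      rw [hVdef, Submodule.mem_inf, LinearMap.mem_ker, LinearMap.mem_ker,
        Matrix.vecMulLinear_apply, hkerA]
    set U : Submodule F (Fin n → F) := LinearMap.ker πU with hUdef
    have memU : ∀ v : Fin n → F, v ∈ U ↔ ∀ j, j ∉ XA → v j = 0 := by
      intro v
      rw [hUdef, LinearMap.mem_ker]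
      constructor
      · intro h j hj
        have := congrFun h j
        simpa [πU, hj] using this
      · intro h
        funext j
        by_cases hj : j ∈ XA <;> simp [πU, hj, h]
    have hgnot : π g ∉ Vsub.map π := by
      rintro ⟨v, hv, hveq⟩
      obtain ⟨hv1, hv2⟩ := (mem_Vsub v).mp hv
      obtain ⟨j, hjB, hjne⟩ := hcon v hv1 hv2
      apply hjne
      have := congrFun hveq j
      simpa [π, hjB] using this
    obtain ⟨f, hf0, hfbot⟩ := Submodule.exists_dual_map_eq_bot_of_notMem hgnot inferInstance
    obtain ⟨a, ha⟩ := (Pi.basisFun F (Fin n)).toDualEquiv.surjective f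
    have hfa : ∀ w : Fin n → F, f w = a ⬝ᵥ w := fun w => by rw [← ha]; exact toDual_pi a w
    have hswap : ∀ b c : Fin n → F, b ⬝ᵥ π c = π b ⬝ᵥ c := by
      intro b c
      apply Finset.sum_congr rfl
      intro j _
      by_cases h : j ∈ B <;> simp [π, h]
    set α : Fin n → F := π a with hαdef
    have hαsupp : ∀ j, α j ≠ 0 → j ∈ B := by
      intro j hj
      by_contra h
      exact hj (by simp [hαdef, π, h])
    have hαne : α ≠ 0 := by
      intro h0
      apply hf0
      rw [hfa, hswap, ← hαdef, h0, zero_dotProduct]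
    have hVdot : ∀ v ∈ Vsub, v ⬝ᵥ α = 0 := by
      intro v hv
      have h1 : f (π v) ∈ (Vsub.map π).map f := Submodule.mem_map_of_mem
        (Submodule.mem_map_of_mem hv)
      rw [hfbot, Submodule.mem_bot] at h1
      rw [dotProduct_comm, hαdef, ← hswap, ← hfa]
      exact h1
    have hαmem : α ∈ W ⊔ U := by
      apply mem_of_perp
      intro v hv
      have hv1 : v ᵥ* L = 0 := (fact1 v).mpr fun w hw => hv w (Submodule.mem_sup_left hw)
      have hv2 : ∀ j ∈ XA, v j = 0 := by
        intro j hj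
        have husingle : Pi.single j (1 : F) ∈ U := by
          rw [memU]
          intro j' hj'
          exact Pi.single_eq_of_ne (by rintro rfl; exact hj' hj) 1
        have := hv _ (Submodule.mem_sup_right husingle)
        rwa [dotProduct_single, mul_one] at this
      exact hVdot v ((mem_Vsub v).mpr ⟨hv1, hv2⟩)
    obtain ⟨w, hw, u, hu, hwu⟩ := Submodule.mem_sup.mp hαmem
    refine hrhs (-u) ?_ α hαsupp hαne ?_
    · intro j hj
      by_contra hjA
      exact hj (by simp [(memU u).mp hu j hjA])
    · have : -u + α = w := by rw [← hwu]; abel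
      rw [this]; exact hw

/-- The adversary has no information about `x_B` iff no vector
`u + Σ_{i∈B} α_i e_i` (with `u ⊲ X_A` and the `α_i` not all zero) lies in `C(L)`;
in particular, for a single index `i ∉ X_A`, the adversary has no information about `x_i`
iff `u + e_i ∉ C(L)` for every `u ⊲ X_A`. -/
theorem stmt_2 {F : Type} [Field F] [Fintype F] {n N : ℕ}
    (L : Matrix (Fin n) (Fin N) F)
    (XA B : Set (Fin n)) (hXA : XA ⊂ Set.univ) (hBne : B.Nonempty) (hB : B ⊆ XAᶜ) :
    (noInfo L XA B ↔
      ∀ u : Fin n → F, (∀ j, u j ≠ 0 → j ∈ XA) →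
        ∀ α : Fin n → F, (∀ j, α j ≠ 0 → j ∈ B) → α ≠ 0 →
          u + α ∉ Submodule.span F (Set.range fun c : Fin N => fun r : Fin n => L r c)) ∧
    (∀ i : Fin n, i ∉ XA →
      (noInfo L XA {i} ↔
        ∀ u : Fin n → F, (∀ j, u j ≠ 0 → j ∈ XA) →
          u + Pi.single i (1 : F) ∉
            Submodule.span F (Set.range fun c : Fin N => fun r : Fin n => L r c))) := by
  refine ⟨key L XA B, fun i hi => ?_⟩
  rw [key L XA {i}]
  constructor
  · intro h u hu
    refine h u hu (Pi.single i 1) (fun j hj => ?_) (fun h0 => ?_)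
    · by_contra hji
      exact hj (Pi.single_eq_of_ne (by simpa using hji) 1)
    · have := congrFun h0 i
      rw [Pi.single_eq_same] at this
      exact one_ne_zero this
  · intro h u hu α hα hα0 hmem
    have hαi : α i ≠ 0 := by
      intro h0
      apply hα0
      funext j
      by_cases hj : j = i
      · subst hj; exact h0
      · by_contra hc
        exact hj (hα j hc)
    have hrepr : (α i)⁻¹ • α = Pi.single i (1 : F) := by
      funext j
      by_cases hj : j = i
      · subst hj
        rw [Pi.smul_apply, Pi.single_eq_same, smul_eq_mul, inv_mul_cancel₀ hαi]
      · have : α j = 0 := by by_contra hc; exact hj (hα j hc)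
        rw [Pi.smul_apply, this, smul_zero, Pi.single_eq_of_ne hj]
    have hmem' := Submodule.smul_mem _ (α i)⁻¹ hmem
    rw [smul_add, hrepr] at hmem'
    exact h ((α i)⁻¹ • u) (fun j hj => hu j (by
      intro h0
      apply hj
      rw [Pi.smul_apply, h0, smul_zero])) hmem'
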